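/- For every integer n ≥ 1, the piecewise function vol(t) defined by vol(t) = -(4n(2n+1)t² + 12nt - 9(2n+1))/(8n(4n+1)) for 0 ≤ t ≤ 3/(4n), vol(t) = (3-2t)²/(8(2n-1)) for 3/(4n) ≤ t ≤ 3/2, and vol(t) = 0 for t ≥ 3/2, satisfies (8n(4n+1)/(9(2n+1))) · ∫₀^∞ vol(t) dt = (4n²+3n+1)/(4n(2n+1)) whenever n ≥ 2. -/

import Mathlib

open MeasureTheory

theorem stmt_2 (n : ℕ) (hn : 1 ≤ n) (hn2 : 2 ≤ n) :
    (8 * (n : ℝ) * (4 * n + 1) / (9 * (2 * n + 1))) *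
      ∫ t in Set.Ioi (0 : ℝ),
        (if t ≤ 3 / (4 * (n : ℝ)) then
            -(4 * n * (2 * (n : ℝ) + 1) * t ^ 2 + 12 * n * t - 9 * (2 * n + 1)) / (8 * n * (4 * n + 1))
         else if t ≤ 3 / 2 then (3 - 2 * t) ^ 2 / (8 * (2 * n - 1))
         else 0)
      = (4 * n ^ 2 + 3 * n + 1) / (4 * n * (2 * n + 1)) := by
  have hN : (2:ℝ) ≤ (n:ℝ) := by exact_mod_cast hn2
  set N : ℝ := (n:ℝ) with hNdef
  have hN0 : (0:ℝ) < N := by linarith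
  have hD1 : (2*N+1) ≠ 0 := by positivity
  have hD2 : (4*N+1) ≠ 0 := by positivity
  have hD3 : (2*N-1) ≠ 0 := by nlinarith
  have hA0 : (0:ℝ) < 3/(4*N) := by positivity
  have hA2 : 3/(4*N) ≤ 3/2 := by
    rw [div_le_div_iff₀ (by linarith) (by norm_num)]; nlinarith
  set A : ℝ := 3/(4*N) with hAdef
  set f : ℝ → ℝ := fun t =>
    if t ≤ A then -(4*N*(2*N+1)*t^2 + 12*N*t - 9*(2*N+1))/(8*N*(4*N+1))
    else if t ≤ 3/2 then (3-2*t)^2/(8*(2*N-1)) else 0 with hf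
  set p1 : ℝ → ℝ := fun t => -(4*N*(2*N+1)*t^2 + 12*N*t - 9*(2*N+1))/(8*N*(4*N+1)) with hp1
  set p2 : ℝ → ℝ := fun t => (3-2*t)^2/(8*(2*N-1)) with hp2
  have cont1 : Continuous p1 := by fun_prop
  have cont2 : Continuous p2 := by fun_prop
  set F1 : ℝ → ℝ := fun t => -(4*N*(2*N+1)*t^3/3 + 6*N*t^2 - 9*(2*N+1)*t)/(8*N*(4*N+1)) with hF1
  set F2 : ℝ → ℝ := fun t => -(3-2*t)^3/(48*(2*N-1)) with hF2
  have hd1 : ∀ x : ℝ, HasDerivAt F1 (p1 x) x := by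
    intro x
    have h2 := ((((((hasDerivAt_pow 3 x).const_mul (4*N*(2*N+1))).div_const 3).add
        ((hasDerivAt_pow 2 x).const_mul (6*N))).sub
        (HasDerivAt.const_mul (9*(2*N+1)) (hasDerivAt_id' (x := x)))).neg).div_const (8*N*(4*N+1))
    refine HasDerivAt.congr_deriv h2 ?_
    simp only [hp1]
    push_cast
    ring
  have hd2 : ∀ x : ℝ, HasDerivAt F2 (p2 x) x := by
    intro x
    have h : HasDerivAt (fun t : ℝ => 3 - 2*t) (0 - 2*1) x :=
      (hasDerivAt_const x 3).sub ((hasDerivAt_id x).const_mul 2)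
    have h2 := ((h.pow 3).neg).div_const (48*(2*N-1))
    refine HasDerivAt.congr_deriv h2 ?_
    simp [hp2]
    field_simp
    ring
  have meas1 : MeasurableSet (Set.Ioc (0:ℝ) A) := measurableSet_Ioc
  have meas2 : MeasurableSet (Set.Ioc A (3/2:ℝ)) := measurableSet_Ioc
  have meas3 : MeasurableSet (Set.Ioi (3/2:ℝ)) := measurableSet_Ioi
  have eq1 : Set.EqOn f p1 (Set.Ioc (0:ℝ) A) := by
    intro t ht; simp only [hf]; rw [if_pos ht.2]
  have eq2 : Set.EqOn f p2 (Set.Ioc A (3/2:ℝ)) := by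
    intro t ht; simp only [hf]; rw [if_neg (not_le.2 ht.1), if_pos ht.2]
  have eq3 : Set.EqOn f (fun _ => (0:ℝ)) (Set.Ioi (3/2:ℝ)) := by
    intro t ht
    simp only [hf]
    rw [if_neg (not_le.2 (lt_of_le_of_lt hA2 ht)), if_neg (not_le.2 ht)]
  have int1 : IntegrableOn f (Set.Ioc (0:ℝ) A) :=
    (cont1.integrableOn_Ioc).congr_fun eq1.symm meas1
  have int2 : IntegrableOn f (Set.Ioc A (3/2:ℝ)) :=
    (cont2.integrableOn_Ioc).congr_fun eq2.symm meas2
  have int3 : IntegrableOn f (Set.Ioi (3/2:ℝ)) :=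
    (integrableOn_zero).congr_fun eq3.symm meas3
  have int12 : IntegrableOn f (Set.Ioc (0:ℝ) (3/2)) := by
    rw [← Set.Ioc_union_Ioc_eq_Ioc hA0.le hA2]
    exact int1.union int2
  have split1 : ∫ t in Set.Ioi (0:ℝ), f t
      = (∫ t in Set.Ioc (0:ℝ) (3/2), f t) + ∫ t in Set.Ioi (3/2:ℝ), f t := by
    rw [← Set.Ioc_union_Ioi_eq_Ioi (by norm_num : (0:ℝ) ≤ 3/2)]
    exact setIntegral_union (Set.Ioc_disjoint_Ioi le_rfl) meas3 int12 int3
  have split2 : ∫ t in Set.Ioc (0:ℝ) (3/2), f t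
      = (∫ t in Set.Ioc (0:ℝ) A, f t) + ∫ t in Set.Ioc A (3/2:ℝ), f t := by
    rw [← Set.Ioc_union_Ioc_eq_Ioc hA0.le hA2]
    exact setIntegral_union (Set.Ioc_disjoint_Ioc_of_le le_rfl) meas2 int1 int2
  have I3 : ∫ t in Set.Ioi (3/2:ℝ), f t = 0 := by
    rw [setIntegral_congr_fun meas3 eq3]; simp
  have I1 : ∫ t in Set.Ioc (0:ℝ) A, f t = F1 A - F1 0 := by
    rw [setIntegral_congr_fun meas1 eq1, ← intervalIntegral.integral_of_le hA0.le]
    exact intervalIntegral.integral_eq_sub_of_hasDerivAt (fun x _ => hd1 x)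
      (cont1.intervalIntegrable _ _)
  have I2 : ∫ t in Set.Ioc A (3/2:ℝ), f t = F2 (3/2) - F2 A := by
    rw [setIntegral_congr_fun meas2 eq2, ← intervalIntegral.integral_of_le hA2]
    exact intervalIntegral.integral_eq_sub_of_hasDerivAt (fun x _ => hd2 x)
      (cont2.intervalIntegrable _ _)
  rw [show (∫ t in Set.Ioi (0:ℝ),
        (if t ≤ 3 / (4 * N) then
            -(4 * N * (2 * N + 1) * t ^ 2 + 12 * N * t - 9 * (2 * N + 1)) / (8 * N * (4 * N + 1))
         else if t ≤ 3 / 2 then (3 - 2 * t) ^ 2 / (8 * (2 * N - 1))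
         else 0)) = ∫ t in Set.Ioi (0:ℝ), f t from rfl]
  rw [split1, split2, I1, I2, I3]
  simp only [hF1, hF2, hAdef]
  have hN' : N ≠ 0 := ne_of_gt hN0
  have hD3' : N*2-1 ≠ 0 := by intro h; linarith
  field_simp
  ring
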